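/- arXiv:2410.18476 — 3 statements merged into one kernel-verified Lean document; each statement's English description precedes it below -/
import Mathlib

section
/- If g(t) is a function admitting a Laurent expansion g(e^{-s}) = 2A₀/s³ + A₁/s² + O(1/s) as s → 0⁺, then for q > 0 and small ε, the function g_ε(t) = (1-t^q)/(1-t^{q+ε}) · g(t) has Laurent expansion with leading coefficients 2A₀q/(q+ε) in 1/s³ and (2A₀ε + 2A₁)q/(2(q+ε)) in 1/s². -/
open Filter Topology Real

private lemma limA (a : ℝ) :
    Tendsto (fun s : ℝ => (1 - Real.exp (-(a * s))) / s) (𝓝[>] 0) (𝓝 a) := by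
  have hd : HasDerivAt (fun s : ℝ => 1 - Real.exp (-(a * s))) a 0 := by
    have h1 : HasDerivAt (fun s : ℝ => -(a * s)) (-a) 0 := by
      simpa [Pi.neg_def] using ((hasDerivAt_id (0 : ℝ)).const_mul a).neg
    have h2 : HasDerivAt (fun s : ℝ => Real.exp (-(a * s))) (-a) 0 := by
      simpa [Function.comp_def] using (Real.hasDerivAt_exp (-(a * 0))).comp 0 h1
    simpa [Pi.sub_def] using (hasDerivAt_const (0 : ℝ) (1 : ℝ)).sub h2
  have h3 := hasDerivAt_iff_tendsto_slope.mp hd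
  have h4 : 𝓝[>] (0 : ℝ) ≤ 𝓝[≠] (0 : ℝ) :=
    nhdsWithin_mono 0 fun x hx => Set.mem_compl_singleton_iff.2 (ne_of_gt hx)
  refine (h3.mono_left h4).congr' ?_
  filter_upwards [self_mem_nhdsWithin] with s hs
  simp [slope_def_field]

private lemma limB (a : ℝ) :
    Tendsto (fun s : ℝ => (Real.exp (-(a * s)) - 1 + a * s) / s ^ 2) (𝓝[>] 0)
      (𝓝 (a ^ 2 / 2)) := by
  have hder : ∀ x : ℝ, HasDerivAt (fun s : ℝ => Real.exp (-(a * s)) - 1 + a * s)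
      (Real.exp (-(a * x)) * -a + a) x := by
    intro x
    have h1 : HasDerivAt (fun s : ℝ => -(a * s)) (-a) x := by
      simpa [Pi.neg_def] using ((hasDerivAt_id x).const_mul a).neg
    have h2 : HasDerivAt (fun s : ℝ => Real.exp (-(a * s))) (Real.exp (-(a * x)) * -a) x :=
      (Real.hasDerivAt_exp (-(a * x))).comp (h₂ := Real.exp) x h1
    have h3 : HasDerivAt (fun s : ℝ => a * s) a x := by
      simpa using (hasDerivAt_id x).const_mul a
    exact (h2.sub_const 1).add h3
  have hgd : ∀ x : ℝ, HasDerivAt (fun s : ℝ => s ^ 2) (2 * x) x := by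
    intro x
    have := hasDerivAt_pow 2 x
    simpa using this
  apply HasDerivAt.lhopital_zero_nhdsGT
    (f' := fun x => Real.exp (-(a * x)) * -a + a) (g' := fun x => 2 * x)
  · exact Eventually.of_forall hder
  · exact Eventually.of_forall hgd
  · filter_upwards [self_mem_nhdsWithin] with x (hx : (0:ℝ) < x)
    positivity
  · have hcont : Continuous (fun s : ℝ => Real.exp (-(a * s)) - 1 + a * s) := by
      continuity
    have hle : 𝓝[>] (0 : ℝ) ≤ 𝓝 (0 : ℝ) := nhdsWithin_le_nhds
    have := (hcont.continuousAt (x := (0 : ℝ))).mono_left hle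
    simpa using this
  · have hle : 𝓝[>] (0 : ℝ) ≤ 𝓝 (0 : ℝ) := nhdsWithin_le_nhds
    have := ((continuous_pow 2).continuousAt (x := (0 : ℝ))).mono_left hle
    simpa using this
  · have h := (limA a).const_mul (a / 2)
    have hval : a / 2 * a = a ^ 2 / 2 := by ring
    rw [hval] at h
    refine h.congr' ?_
    filter_upwards [self_mem_nhdsWithin] with x (hx : (0:ℝ) < x)
    have hx' : x ≠ 0 := ne_of_gt hx
    field_simp
    ring

/-- If `g(e^{-s}) = 2A₀/s³ + A₁/s² + O(1/s)` as `s → 0⁺`, then for `q > 0` and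
small `ε` the perturbed function `gₑ(t) = (1-t^q)/(1-t^{q+ε})·g(t)` has Laurent
expansion with leading coefficients `2A₀q/(q+ε)` in `1/s³` and
`q(2A₀ε + 2A₁)/(2(q+ε))` in `1/s²`. -/
theorem perturbed_laurent_expansion (g : ℝ → ℝ) (A₀ A₁ q ε : ℝ)
    (hq : 0 < q) (hqε : 0 < q + ε)
    (h0 : Tendsto (fun s : ℝ => s ^ 3 * g (Real.exp (-s)))
      (𝓝[>] 0) (𝓝 (2 * A₀)))
    (h1 : Tendsto (fun s : ℝ => s ^ 2 * (g (Real.exp (-s)) - 2 * A₀ / s ^ 3))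
      (𝓝[>] 0) (𝓝 A₁)) :
    Tendsto (fun s : ℝ => s ^ 3 *
        ((1 - Real.exp (-s) ^ q) / (1 - Real.exp (-s) ^ (q + ε)) * g (Real.exp (-s))))
      (𝓝[>] 0) (𝓝 (2 * A₀ * q / (q + ε))) ∧
    Tendsto (fun s : ℝ => s ^ 2 *
        ((1 - Real.exp (-s) ^ q) / (1 - Real.exp (-s) ^ (q + ε)) * g (Real.exp (-s))
          - 2 * A₀ * q / (q + ε) / s ^ 3))
      (𝓝[>] 0) (𝓝 ((2 * A₀ * ε + 2 * A₁) * q / (2 * (q + ε)))) := by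
  have hrw : ∀ (s a : ℝ), Real.exp (-s) ^ a = Real.exp (-(a * s)) := by
    intro s a
    rw [Real.rpow_def_of_pos (Real.exp_pos _), Real.log_exp]
    congr 1
    ring
  have hqε' : q + ε ≠ 0 := ne_of_gt hqε
  -- denominator positivity
  have hD : ∀ s : ℝ, 0 < s → 0 < 1 - Real.exp (-((q + ε) * s)) := by
    intro s hs
    have : Real.exp (-((q + ε) * s)) < 1 := by
      apply Real.exp_lt_one_iff.2
      nlinarith
    linarith
  set r : ℝ → ℝ := fun s => (1 - Real.exp (-(q * s))) / (1 - Real.exp (-((q + ε) * s)))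
    with hrdef
  -- r → q/(q+ε)
  have hr : Tendsto r (𝓝[>] 0) (𝓝 (q / (q + ε))) := by
    have h := (limA q).div (limA (q + ε)) hqε'
    refine h.congr' ?_
    filter_upwards [self_mem_nhdsWithin] with s (hs : (0:ℝ) < s)
    have hs' : s ≠ 0 := ne_of_gt hs
    have hD' : 1 - Real.exp (-((q + ε) * s)) ≠ 0 := ne_of_gt (hD s hs)
    simp only [hrdef, Pi.div_apply]
    field_simp
  -- (r - q/(q+ε))/s → q*ε/(2*(q+ε))
  have hr2 : Tendsto (fun s => (r s - q / (q + ε)) / s) (𝓝[>] 0)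
      (𝓝 (q * ε / (2 * (q + ε)))) := by
    -- second factor : s / ((q+ε) * (1 - exp(-((q+ε)s)))) → (q+ε)⁻² ... as inverse
    have hf2 : Tendsto (fun s : ℝ => s / ((q + ε) * (1 - Real.exp (-((q + ε) * s)))))
        (𝓝[>] 0) (𝓝 (((q + ε) * (q + ε))⁻¹)) := by
      have h := (((limA (q + ε)).const_mul (q + ε)).inv₀ (by positivity))
      refine h.congr' ?_
      filter_upwards [self_mem_nhdsWithin] with s (hs : (0:ℝ) < s)
      have hs' : s ≠ 0 := ne_of_gt hs
      have hD' : 1 - Real.exp (-((q + ε) * s)) ≠ 0 := ne_of_gt (hD s hs)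
      field_simp
    have hf1 : Tendsto (fun s : ℝ =>
        -(q + ε) * ((Real.exp (-(q * s)) - 1 + q * s) / s ^ 2)
          + q * ((Real.exp (-((q + ε) * s)) - 1 + (q + ε) * s) / s ^ 2)) (𝓝[>] 0)
        (𝓝 (-(q + ε) * (q ^ 2 / 2) + q * ((q + ε) ^ 2 / 2))) :=
      ((limB q).const_mul (-(q + ε))).add ((limB (q + ε)).const_mul q)
    have h := hf1.mul hf2
    have hval : (-(q + ε) * (q ^ 2 / 2) + q * ((q + ε) ^ 2 / 2)) * ((q + ε) * (q + ε))⁻¹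
        = q * ε / (2 * (q + ε)) := by
      field_simp
      ring
    rw [hval] at h
    refine h.congr' ?_
    filter_upwards [self_mem_nhdsWithin] with s (hs : (0:ℝ) < s)
    have hs' : s ≠ 0 := ne_of_gt hs
    have hD' : 1 - Real.exp (-((q + ε) * s)) ≠ 0 := ne_of_gt (hD s hs)
    simp only [hrdef]
    field_simp
    ring
  constructor
  · -- part 1
    have h := hr.mul h0
    have hval : q / (q + ε) * (2 * A₀) = 2 * A₀ * q / (q + ε) := by
      field_simp
    rw [hval] at h
    refine h.congr' ?_
    filter_upwards [self_mem_nhdsWithin] with s (hs : (0:ℝ) < s)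
    simp only [hrw, hrdef]
    ring
  · -- part 2
    have h := (hr.mul h1).add (hr2.const_mul (2 * A₀))
    have hval : q / (q + ε) * A₁ + 2 * A₀ * (q * ε / (2 * (q + ε)))
        = (2 * A₀ * ε + 2 * A₁) * q / (2 * (q + ε)) := by
      field_simp; ring
    rw [hval] at h
    refine h.congr' ?_
    filter_upwards [self_mem_nhdsWithin] with s (hs : (0:ℝ) < s)
    have hs' : s ≠ 0 := ne_of_gt hs
    simp only [hrw]
    have key : ∀ R : ℝ, R * (s ^ 2 * (g (Real.exp (-s)) - 2 * A₀ / s ^ 3))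
        + 2 * A₀ * ((R - q / (q + ε)) / s)
        = s ^ 2 * (R * g (Real.exp (-s)) - 2 * A₀ * q / (q + ε) / s ^ 3) := by
      intro R
      field_simp
      ring
    exact key _
end

section
/- The function g(t₁,t₂,t₃,t₄) = (1 - t₁²t₂²t₃²t₄²)(1 - t₁t₂t₃³t₄³) / ((1 - t₁²t₂²)(1 - t₁t₃³)(1 - t₃²t₄²)(1 - t₂t₄³)(1 - t₁t₂t₃t₄)), specialized via t₁ = t₂ = t^{(5-√7)/6} and t₃ = t₄ = t^{(1+√7)/6} with t = e^{-s}, has Laurent expansion (7√7 - 10)/(18s³) + (7√7 - 10)/(18s²) + O(1/s) as s → 0⁺. -/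
open Filter Topology

/-- The Hilbert series of the mesonic moduli space of the `L^{1,3,1}/ℤ₂ (0,1,1,1)`
model, unrefined under the `U(1)_R` symmetry: `t_α = t^{r_α}` with `t = e^{-s}`,
`r₁ = r₂ = (5-√7)/6`, `r₃ = r₄ = (1+√7)/6`. -/
noncomputable def G6 (s : ℝ) : ℝ :=
  let t1 : ℝ := Real.exp (-s) ^ ((5 - Real.sqrt 7) / 6)
  let t2 : ℝ := Real.exp (-s) ^ ((5 - Real.sqrt 7) / 6)
  let t3 : ℝ := Real.exp (-s) ^ ((1 + Real.sqrt 7) / 6)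
  let t4 : ℝ := Real.exp (-s) ^ ((1 + Real.sqrt 7) / 6)
  ((1 - t1 ^ 2 * t2 ^ 2 * t3 ^ 2 * t4 ^ 2) * (1 - t1 * t2 * t3 ^ 3 * t4 ^ 3)) /
    ((1 - t1 ^ 2 * t2 ^ 2) * (1 - t1 * t3 ^ 3) * (1 - t3 ^ 2 * t4 ^ 2) *
      (1 - t2 * t4 ^ 3) * (1 - t1 * t2 * t3 * t4))

/-! ### Auxiliary definitions and lemmas -/

/-- `(1 - e^{-x})/x`, extended by its limit `1` at `x = 0`. -/
noncomputable def vv (x : ℝ) : ℝ := if x = 0 then 1 else (1 - Real.exp (-x)) / x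

lemma vv_zero : vv 0 = 1 := if_pos rfl
lemma vv_of_ne {x : ℝ} (hx : x ≠ 0) : vv x = (1 - Real.exp (-x)) / x := if_neg hx

lemma hderiv_exp_neg (x : ℝ) : HasDerivAt (fun y : ℝ => Real.exp (-y)) (-Real.exp (-x)) x := by
  simpa [Function.comp_def] using (Real.hasDerivAt_exp (-x)).comp x ((hasDerivAt_id x).neg)

lemma hf_deriv (x : ℝ) : HasDerivAt (fun y : ℝ => 1 - Real.exp (-y) - y) (Real.exp (-x) - 1) x := by
  have h := ((hasDerivAt_const x (1:ℝ)).sub (hderiv_exp_neg x)).sub (hasDerivAt_id x)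
  exact h.congr_deriv (by ring)

lemma key_lim : Tendsto (fun x : ℝ => (1 - Real.exp (-x) - x) / x ^ 2)
    (𝓝[≠] (0:ℝ)) (𝓝 (-(1/2))) := by
  have heq : ∀ x : ℝ, (Real.exp (-x) - 1) / (2 * x)
      = 1/2 * slope (fun y : ℝ => Real.exp (-y)) 0 x := by
    intro x; rw [slope_def_field]; norm_num; ring
  have hslope : Tendsto (fun x : ℝ => (Real.exp (-x) - 1) / (2 * x)) (𝓝[≠] (0:ℝ))
      (𝓝 (-(1/2))) := by
    have h := hasDerivAt_iff_tendsto_slope.1 (hderiv_exp_neg 0)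
    simp only [neg_zero, Real.exp_zero] at h
    have h2 := h.const_mul (1/2 : ℝ)
    have h3 : Tendsto (fun x : ℝ => (Real.exp (-x) - 1) / (2 * x)) (𝓝[≠] (0:ℝ))
        (𝓝 (1/2 * -1)) := h2.congr fun x => (heq x).symm
    convert h3 using 2; norm_num
  refine HasDerivAt.lhopital_zero_nhdsNE (f' := fun x => Real.exp (-x) - 1) (g' := fun x => 2 * x)
    ?_ ?_ ?_ ?_ ?_ ?_
  · exact Eventually.of_forall fun x => hf_deriv x
  · refine Eventually.of_forall fun x => ?_
    simpa [mul_comm] using hasDerivAt_pow 2 x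
  · filter_upwards [self_mem_nhdsWithin] with x (hx : x ≠ 0)
    simpa using hx
  · have : Tendsto (fun x : ℝ => 1 - Real.exp (-x) - x) (𝓝 0) (𝓝 0) := by
      have := (Real.continuous_exp.comp continuous_neg).tendsto 0
      simpa using ((tendsto_const_nhds (x := (1:ℝ))).sub this).sub (continuous_id.tendsto 0)
    exact this.mono_left nhdsWithin_le_nhds
  · have : Tendsto (fun x : ℝ => x ^ 2) (𝓝 (0:ℝ)) (𝓝 0) := by
      simpa using (continuous_pow 2).tendsto (0:ℝ)
    exact this.mono_left nhdsWithin_le_nhds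
  · exact hslope

lemma vv_hasDeriv : HasDerivAt vv (-(1/2)) 0 := by
  rw [hasDerivAt_iff_tendsto_slope]
  refine key_lim.congr' ?_
  filter_upwards [self_mem_nhdsWithin] with x (hx : x ≠ 0)
  rw [slope_def_field, vv_zero, vv_of_ne hx, sub_zero]
  have h1 : (1 - Real.exp (-x)) / x - 1 = (1 - Real.exp (-x) - x) / x := by
    field_simp
  rw [h1, div_div]
  ring

noncomputable def aA : ℝ := (8 + 2*Real.sqrt 7)/3
noncomputable def bB : ℝ := (10 - 2*Real.sqrt 7)/3
noncomputable def cC : ℝ := (4 + Real.sqrt 7)/3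
noncomputable def dD : ℝ := (2 + 2*Real.sqrt 7)/3
noncomputable def CC : ℝ := (7*Real.sqrt 7 - 10)/18

lemma vv_k (k : ℝ) : HasDerivAt (fun s : ℝ => vv (k * s)) (-(k/2)) 0 := by
  have h2 : HasDerivAt (fun s : ℝ => k * s) k 0 := by
    simpa using (hasDerivAt_id (0:ℝ)).const_mul k
  have h := (show HasDerivAt vv (-(1/2)) (k*0) by simpa using vv_hasDeriv).comp 0 h2
  exact h.congr_deriv (by ring)

/-- The extension of `s ↦ s³ * G6 s` to a function differentiable at `0`. -/
noncomputable def FF (s : ℝ) : ℝ :=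
  CC * (vv (4*s) * vv (aA*s)) / (vv (bB*s) * vv (cC*s)^2 * vv (dD*s) * vv (2*s))

lemma FF_zero : FF 0 = CC := by norm_num [FF, vv_zero]

lemma FF_hasDeriv : HasDerivAt FF CC 0 := by
  have hN := ((vv_k 4).mul (vv_k aA)).const_mul CC
  have hD := (((vv_k bB).mul ((vv_k cC).pow 2)).mul (vv_k dD)).mul (vv_k 2)
  have hD0 : (vv (bB*0) * vv (cC*0)^2 * vv (dD*0) * vv (2*0)) ≠ 0 := by
    norm_num [vv_zero]
  have h := hN.div hD hD0
  refine h.congr_deriv ?_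
  norm_num [vv_zero]
  simp only [aA, bB, cC, dD]
  ring

lemma sqrt7_sq : Real.sqrt 7 ^ 2 = 7 := Real.sq_sqrt (by norm_num)
lemma sqrt7_lt : Real.sqrt 7 < 3 := by nlinarith [sqrt7_sq, Real.sqrt_nonneg 7]
lemma aA_pos : 0 < aA := by unfold aA; nlinarith [Real.sqrt_nonneg 7]
lemma bB_pos : 0 < bB := by unfold bB; nlinarith [sqrt7_lt]
lemma cC_pos : 0 < cC := by unfold cC; nlinarith [Real.sqrt_nonneg 7]
lemma dD_pos : 0 < dD := by unfold dD; nlinarith [Real.sqrt_nonneg 7]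

lemma hCC : CC * (2 * bB * cC^2 * dD) = 4 * aA := by
  simp only [CC, aA, bB, cC, dD]
  linear_combination ((-28/729)*Real.sqrt 7^3 - (8/81)*Real.sqrt 7^2 + (184/243)*Real.sqrt 7
    + 1568/729) * sqrt7_sq

lemma G6_eq (s : ℝ) : G6 s =
    ((1 - Real.exp (4 * -s)) * (1 - Real.exp (aA * -s))) /
      ((1 - Real.exp (bB * -s)) * (1 - Real.exp (cC * -s))^2 * (1 - Real.exp (dD * -s)) *
        (1 - Real.exp (2 * -s))) := by
  have hr : Real.exp (-s) ^ ((5 - Real.sqrt 7)/6) = Real.exp ((5 - Real.sqrt 7)/6 * -s) := by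
    rw [mul_comm, Real.exp_mul]
  have hq : Real.exp (-s) ^ ((1 + Real.sqrt 7)/6) = Real.exp ((1 + Real.sqrt 7)/6 * -s) := by
    rw [mul_comm, Real.exp_mul]
  simp only [G6, hr, hq, aA, bB, cC, dD, ← Real.exp_nat_mul, ← Real.exp_add]
  norm_num
  ring_nf

lemma alg {C a b c d s u1 u2 u3 u4 u5 u6 : ℝ} (ha : a ≠ 0) (hb : b ≠ 0) (hc : c ≠ 0) (hd : d ≠ 0)
    (hs : s ≠ 0) (h3 : u3 ≠ 0) (h4 : u4 ≠ 0) (h5 : u5 ≠ 0) (h6 : u6 ≠ 0)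
    (hC : C * (2*b*c^2*d) = 4*a) :
    C * (u1/(4*s) * (u2/(a*s))) / (u3/(b*s) * (u4/(c*s))^2 * (u5/(d*s)) * (u6/(2*s)))
      = s^3 * ((u1*u2)/(u3*u4^2*u5*u6)) := by
  field_simp
  linear_combination (u1*u2) * hC

lemma FF_eq {s : ℝ} (hs : 0 < s) : FF s = s ^ 3 * G6 s := by
  have key : ∀ k : ℝ, 0 < k → 0 < 1 - Real.exp (-(k * s)) := by
    intro k hk
    have h1 : Real.exp (-(k * s)) < 1 := by
      rw [Real.exp_lt_one_iff]; nlinarith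
    linarith
  have e3 := key bB bB_pos
  have e4 := key cC cC_pos
  have e5 := key dD dD_pos
  have e6 := key 2 (by norm_num)
  rw [G6_eq, FF, vv_of_ne (by positivity : (4:ℝ)*s ≠ 0),
    vv_of_ne (mul_ne_zero aA_pos.ne' hs.ne'),
    vv_of_ne (mul_ne_zero bB_pos.ne' hs.ne'), vv_of_ne (mul_ne_zero cC_pos.ne' hs.ne'),
    vv_of_ne (mul_ne_zero dD_pos.ne' hs.ne'), vv_of_ne (by positivity : (2:ℝ)*s ≠ 0)]
  simp only [mul_neg]
  exact alg aA_pos.ne' bB_pos.ne' cC_pos.ne' dD_pos.ne' hs.ne' e3.ne' e4.ne' e5.ne' e6.ne' hCC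

/-- The Laurent expansion of the Hilbert series is
`(7√7-10)/(18s³) + (7√7-10)/(18s²) + O(1/s)` as `s → 0⁺`. -/
theorem laurent_expansion_L131Z2 :
    Tendsto (fun s : ℝ => s ^ 3 * G6 s) (𝓝[>] 0)
      (𝓝 ((7 * Real.sqrt 7 - 10) / 18)) ∧
    Tendsto (fun s : ℝ => s ^ 2 * (G6 s - (7 * Real.sqrt 7 - 10) / (18 * s ^ 3)))
      (𝓝[>] 0) (𝓝 ((7 * Real.sqrt 7 - 10) / 18)) := by
  have hmem : ∀ᶠ s in 𝓝[>] (0:ℝ), FF s = s ^ 3 * G6 s := by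
    filter_upwards [self_mem_nhdsWithin] with s (hs : 0 < s)
    exact FF_eq hs
  have hmono : 𝓝[>] (0:ℝ) ≤ 𝓝[≠] (0:ℝ) :=
    nhdsWithin_mono 0 fun x hx => ne_of_gt hx
  constructor
  · have h1 : Tendsto FF (𝓝 0) (𝓝 CC) := by
      have := FF_hasDeriv.continuousAt.tendsto
      rwa [FF_zero] at this
    exact ((h1.mono_left nhdsWithin_le_nhds).congr' hmem)
  · have h2 := hasDerivAt_iff_tendsto_slope.1 FF_hasDeriv
    refine ((h2.mono_left hmono).congr' ?_)
    filter_upwards [self_mem_nhdsWithin] with s (hs : 0 < s)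
    rw [slope_def_field, FF_zero, FF_eq hs, sub_zero, CC]
    field_simp
end

section
/- The rational function g(t₁,t₂,t₃,t₄) = (1 - t₁²t₂²t₃²t₄²)(1 - t₁t₂t₃³t₄³)/((1 - t₁²t₂²)(1 - t₁t₃³)(1 - t₃²t₄²)(1 - t₂t₄³)(1 - t₁t₂t₃t₄)) is the Hilbert series of the ring C[x₁,...,x₅]/(x₁x₄ - x₃², x₃x₄ - x₂x₅) under the multigrading deg(x₁) = (2,2,0,0), deg(x₂) = (1,0,3,0), deg(x₃) = (1,1,1,1), deg(x₄) = (0,0,2,2), deg(x₅) = (0,1,0,3). -/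
noncomputable section

open MvPolynomial

/-- The ideal `(x₁x₄ - x₃², x₃x₄ - x₂x₅)` in `ℂ[x₁,…,x₅]` (variables indexed
`0,…,4`). -/
def mesIdeal : Ideal (MvPolynomial (Fin 5) ℂ) :=
  Ideal.span {X 0 * X 3 - X 2 ^ 2, X 2 * X 3 - X 1 * X 4}

/-- The coordinate ring `ℂ[x₁,…,x₅]/(x₁x₄ - x₃², x₃x₄ - x₂x₅)` of the mesonic
moduli space of the `L^{1,3,1}/ℤ₂ (0,1,1,1)` model. -/
abbrev MesRing := MvPolynomial (Fin 5) ℂ ⧸ mesIdeal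

/-- The multidegrees of the generators: `deg x₁ = (2,2,0,0)`, `deg x₂ = (1,0,3,0)`,
`deg x₃ = (1,1,1,1)`, `deg x₄ = (0,0,2,2)`, `deg x₅ = (0,1,0,3)`. -/
def genDeg : Fin 5 → (Fin 4 →₀ ℕ) :=
  ![Finsupp.equivFunOnFinite.symm ![2, 2, 0, 0],
    Finsupp.equivFunOnFinite.symm ![1, 0, 3, 0],
    Finsupp.equivFunOnFinite.symm ![1, 1, 1, 1],
    Finsupp.equivFunOnFinite.symm ![0, 0, 2, 2],
    Finsupp.equivFunOnFinite.symm ![0, 1, 0, 3]]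

/-- The multidegree of a monomial exponent vector. -/
def monDeg (e : Fin 5 →₀ ℕ) : Fin 4 →₀ ℕ := e.sum fun i k => k • genDeg i

/-- The graded piece of the quotient ring in multidegree `v`: the `ℂ`-span of
the images of the monomials of multidegree `v`. -/
def gradedPiece (v : Fin 4 →₀ ℕ) : Submodule ℂ MesRing :=
  Submodule.span ℂ
    ((Ideal.Quotient.mk mesIdeal) ''
      {m | ∃ e : Fin 5 →₀ ℕ, monDeg e = v ∧ m = MvPolynomial.monomial e (1 : ℂ)})

/-- The multigraded Hilbert series `Σ_v dim_ℂ(R_v) t^v`. -/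
def hilbertSeries : MvPowerSeries (Fin 4) ℚ :=
  fun v => (Module.finrank ℂ (gradedPiece v) : ℚ)

/-- The monomial `t₁^a t₂^b t₃^c t₄^d` as a multivariate power series. -/
def mon (a b c d : ℕ) : MvPowerSeries (Fin 4) ℚ :=
  MvPowerSeries.monomial (Finsupp.equivFunOnFinite.symm ![a, b, c, d]) 1

/-! ### Auxiliary development -/

namespace HSaux

/-! #### Vectors in `Fin 4 →₀ ℕ` and `Fin 5 →₀ ℕ` -/

def V (p q r s : ℕ) : Fin 4 →₀ ℕ := Finsupp.equivFunOnFinite.symm ![p, q, r, s]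

lemma V_inj {p q r s p' q' r' s' : ℕ} (h : V p q r s = V p' q' r' s') :
    p = p' ∧ q = q' ∧ r = r' ∧ s = s' :=
  ⟨DFunLike.congr_fun h 0, DFunLike.congr_fun h 1, DFunLike.congr_fun h 2,
    DFunLike.congr_fun h 3⟩

lemma V_congr {p q r s p' q' r' s' : ℕ} (h1 : p = p') (h2 : q = q') (h3 : r = r')
    (h4 : s = s') : V p q r s = V p' q' r' s' := by subst h1 h2 h3 h4; rfl

lemma V_add (p q r s p' q' r' s' : ℕ) :
    V p q r s + V p' q' r' s' = V (p+p') (q+q') (r+r') (s+s') := by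
  ext j; fin_cases j <;> rfl

lemma V_smul (a p q r s : ℕ) : a • V p q r s = V (a*p) (a*q) (a*r) (a*s) := by
  ext j; fin_cases j <;> rfl

lemma genDeg0 : genDeg 0 = V 2 2 0 0 := rfl
lemma genDeg1 : genDeg 1 = V 1 0 3 0 := rfl
lemma genDeg2 : genDeg 2 = V 1 1 1 1 := rfl
lemma genDeg3 : genDeg 3 = V 0 0 2 2 := rfl
lemma genDeg4 : genDeg 4 = V 0 1 0 3 := rfl

lemma deg5 (a b c d e : ℕ) :
    a • genDeg 0 + b • genDeg 1 + c • genDeg 2 + d • genDeg 3 + e • genDeg 4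
      = V (2*a+b+c) (2*a+c+e) (3*b+c+2*d) (c+2*d+3*e) := by
  rw [genDeg0, genDeg1, genDeg2, genDeg3, genDeg4, V_smul, V_smul, V_smul, V_smul, V_smul,
    V_add, V_add, V_add, V_add]
  congr 1 <;> ring_nf

def E (a b c d e : ℕ) : Fin 5 →₀ ℕ := Finsupp.equivFunOnFinite.symm ![a, b, c, d, e]

lemma eta5 (f : Fin 5 →₀ ℕ) : f = E (f 0) (f 1) (f 2) (f 3) (f 4) := by
  ext j; fin_cases j <;> rfl

lemma E_add_E (a b c d e a' b' c' d' e' : ℕ) :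
    E a b c d e + E a' b' c' d' e' = E (a+a') (b+b') (c+c') (d+d') (e+e') := by
  ext j; fin_cases j <;> rfl

lemma monDeg_E (a b c d e : ℕ) :
    monDeg (E a b c d e)
      = a • genDeg 0 + b • genDeg 1 + c • genDeg 2 + d • genDeg 3 + e • genDeg 4 := by
  rw [monDeg, Finsupp.sum_fintype]
  · rw [Fin.sum_univ_five]; rfl
  · intro i; exact zero_smul _ _

lemma monDeg_E' (a b c d e : ℕ) :
    monDeg (E a b c d e) = V (2*a+b+c) (2*a+c+e) (3*b+c+2*d) (c+2*d+3*e) := by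
  rw [monDeg_E, deg5]

/-! #### Moves coming from the two relations -/

lemma X_mul_X (i j : Fin 5) :
    (X i * X j : MvPolynomial (Fin 5) ℂ)
      = monomial (Finsupp.single i 1 + Finsupp.single j 1) 1 := by
  rw [X, X, monomial_mul, one_mul]

lemma single0 : Finsupp.single (0:Fin 5) (1:ℕ) = E 1 0 0 0 0 := by ext j; fin_cases j <;> simp [E]
lemma single1 : Finsupp.single (1:Fin 5) (1:ℕ) = E 0 1 0 0 0 := by ext j; fin_cases j <;> simp [E]
lemma single2 : Finsupp.single (2:Fin 5) (1:ℕ) = E 0 0 1 0 0 := by ext j; fin_cases j <;> simp [E]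
lemma single3 : Finsupp.single (3:Fin 5) (1:ℕ) = E 0 0 0 1 0 := by ext j; fin_cases j <;> simp [E]
lemma single4 : Finsupp.single (4:Fin 5) (1:ℕ) = E 0 0 0 0 1 := by ext j; fin_cases j <;> simp [E]

lemma moveA (a b c d e : ℕ) :
    Ideal.Quotient.mk mesIdeal (monomial (E (a+1) b c (d+1) e) (1:ℂ))
      = Ideal.Quotient.mk mesIdeal (monomial (E a b (c+2) d e) (1:ℂ)) := by
  rw [Ideal.Quotient.eq]
  have h1 : monomial (E (a+1) b c (d+1) e) (1:ℂ) - monomial (E a b (c+2) d e) (1:ℂ)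
      = monomial (E a b c d e) 1 * (X 0 * X 3 - X 2 ^ 2) := by
    rw [mul_sub, X_mul_X, sq, X_mul_X, monomial_mul, monomial_mul, one_mul, single0,
      single3, single2, E_add_E, E_add_E, E_add_E, E_add_E]
    norm_num
  rw [h1]
  exact Ideal.mul_mem_left _ _ (Ideal.subset_span (by simp))

lemma moveB (a b c d e : ℕ) :
    Ideal.Quotient.mk mesIdeal (monomial (E a b (c+1) (d+1) e) (1:ℂ))
      = Ideal.Quotient.mk mesIdeal (monomial (E a (b+1) c d (e+1)) (1:ℂ)) := by
  rw [Ideal.Quotient.eq]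
  have h1 : monomial (E a b (c+1) (d+1) e) (1:ℂ) - monomial (E a (b+1) c d (e+1)) (1:ℂ)
      = monomial (E a b c d e) 1 * (X 2 * X 3 - X 1 * X 4) := by
    rw [mul_sub, X_mul_X, X_mul_X, monomial_mul, monomial_mul, one_mul, single2, single3,
      single1, single4, E_add_E, E_add_E, E_add_E, E_add_E]
    norm_num
  rw [h1]
  exact Ideal.mul_mem_left _ _ (Ideal.subset_span (by simp))

/-! #### Normalization -/

lemma norm (n : ℕ) : ∀ a b c d e : ℕ, a + b + d + e ≤ n →
    ∃ a' b' c' d' e' : ℕ, (a' = 0 ∨ d' = 0) ∧ (b' = 0 ∨ e' = 0) ∧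
      monDeg (E a' b' c' d' e') = monDeg (E a b c d e) ∧
      Ideal.Quotient.mk mesIdeal (monomial (E a b c d e) (1:ℂ))
        = Ideal.Quotient.mk mesIdeal (monomial (E a' b' c' d' e') (1:ℂ)) := by
  induction n with
  | zero =>
    intro a b c d e h
    exact ⟨a, b, c, d, e, Or.inl (by omega), Or.inl (by omega), rfl, rfl⟩
  | succ n ih =>
    intro a b c d e h
    by_cases ha : 0 < a ∧ 0 < d
    · obtain ⟨a', rfl⟩ : ∃ a', a = a' + 1 := ⟨a - 1, by omega⟩
      obtain ⟨d', rfl⟩ : ∃ d', d = d' + 1 := ⟨d - 1, by omega⟩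
      obtain ⟨a₁, b₁, c₁, d₁, e₁, hc1, hc2, hdeg, hmk⟩ := ih a' b (c+2) d' e (by omega)
      refine ⟨a₁, b₁, c₁, d₁, e₁, hc1, hc2, ?_, (moveA a' b c d' e).trans hmk⟩
      rw [hdeg, monDeg_E', monDeg_E']
      exact V_congr (by ring) (by ring) (by ring) (by ring)
    · by_cases hb : 0 < b ∧ 0 < e
      · obtain ⟨b', rfl⟩ : ∃ b', b = b' + 1 := ⟨b - 1, by omega⟩
        obtain ⟨e', rfl⟩ : ∃ e', e = e' + 1 := ⟨e - 1, by omega⟩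
        obtain ⟨a₁, b₁, c₁, d₁, e₁, hc1, hc2, hdeg, hmk⟩ := ih a b' (c+1) (d+1) e' (by omega)
        refine ⟨a₁, b₁, c₁, d₁, e₁, hc1, hc2, ?_, ((moveB a b' c d e').symm).trans hmk⟩
        rw [hdeg, monDeg_E', monDeg_E']
        exact V_congr (by ring) (by ring) (by ring) (by ring)
      · exact ⟨a, b, c, d, e, by omega, by omega, rfl, rfl⟩

/-- Any two monomials of the same multidegree are congruent modulo the ideal. -/
lemma cong {f g : Fin 5 →₀ ℕ} (h : monDeg f = monDeg g) :
    Ideal.Quotient.mk mesIdeal (monomial f (1:ℂ))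
      = Ideal.Quotient.mk mesIdeal (monomial g (1:ℂ)) := by
  rw [eta5 f, eta5 g] at h ⊢
  obtain ⟨a₁, b₁, c₁, d₁, e₁, hA1, hB1, hdeg1, hmk1⟩ :=
    norm (f 0 + f 1 + f 3 + f 4) (f 0) (f 1) (f 2) (f 3) (f 4) le_rfl
  obtain ⟨a₂, b₂, c₂, d₂, e₂, hA2, hB2, hdeg2, hmk2⟩ :=
    norm (g 0 + g 1 + g 3 + g 4) (g 0) (g 1) (g 2) (g 3) (g 4) le_rfl
  have hdeq : monDeg (E a₁ b₁ c₁ d₁ e₁) = monDeg (E a₂ b₂ c₂ d₂ e₂) := by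
    rw [hdeg1, hdeg2, h]
  rw [monDeg_E', monDeg_E'] at hdeq
  obtain ⟨h1, h2, h3, h4⟩ := V_inj hdeq
  obtain ⟨rfl, rfl, rfl, rfl, rfl⟩ :
      a₁ = a₂ ∧ b₁ = b₂ ∧ c₁ = c₂ ∧ d₁ = d₂ ∧ e₁ = e₂ := by omega
  rw [hmk1, hmk2]

/-! #### Nonvanishing of monomials in the quotient -/

lemma mk_monomial_ne_zero (f : Fin 5 →₀ ℕ) :
    Ideal.Quotient.mk mesIdeal (monomial f (1:ℂ)) ≠ 0 := by
  have hker : ∀ p ∈ mesIdeal, MvPolynomial.eval (fun _ : Fin 5 => (1:ℂ)) p = 0 := by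
    intro p hp
    have hle : mesIdeal ≤ RingHom.ker (MvPolynomial.eval (fun _ : Fin 5 => (1:ℂ))) := by
      rw [mesIdeal, Ideal.span_le]
      rintro q (rfl | rfl) <;> simp [RingHom.mem_ker]
    exact hle hp
  set L := Ideal.Quotient.lift mesIdeal (MvPolynomial.eval (fun _ : Fin 5 => (1:ℂ))) hker
  intro h0
  have h1 : L (Ideal.Quotient.mk mesIdeal (monomial f (1:ℂ))) = 1 := by
    simp [L, Ideal.Quotient.lift_mk, MvPolynomial.eval_monomial, Finsupp.prod]
  rw [h0, map_zero] at h1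
  exact one_ne_zero h1.symm

/-! #### The coefficients of the Hilbert series -/

open Classical in
lemma finrank_gradedPiece (v : Fin 4 →₀ ℕ) :
    Module.finrank ℂ (gradedPiece v) = if ∃ e, monDeg e = v then 1 else 0 := by
  by_cases h : ∃ e, monDeg e = v
  · obtain ⟨e₀, he₀⟩ := h
    have himg : (Ideal.Quotient.mk mesIdeal) ''
        {m | ∃ e : Fin 5 →₀ ℕ, monDeg e = v ∧ m = MvPolynomial.monomial e (1 : ℂ)}
        = {Ideal.Quotient.mk mesIdeal (monomial e₀ (1:ℂ))} := by
      apply Set.Subset.antisymm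
      · rintro x ⟨m, ⟨e, he, rfl⟩, rfl⟩
        exact cong (he.trans he₀.symm)
      · rintro x rfl
        exact ⟨monomial e₀ 1, ⟨e₀, he₀, rfl⟩, rfl⟩
    rw [if_pos ⟨e₀, he₀⟩, gradedPiece, himg]
    exact finrank_span_singleton (mk_monomial_ne_zero e₀)
  · have himg : {m | ∃ e : Fin 5 →₀ ℕ, monDeg e = v ∧ m = MvPolynomial.monomial e (1 : ℂ)}
        = (∅ : Set (MvPolynomial (Fin 5) ℂ)) := by
      rw [Set.eq_empty_iff_forall_notMem]
      rintro m ⟨e, he, rfl⟩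
      exact h ⟨e, he⟩
    rw [if_neg h, gradedPiece, himg, Set.image_empty, Submodule.span_empty, finrank_bot]


/-! #### Power series -/

open Classical in
def Geom (g : Fin 4 →₀ ℕ) : MvPowerSeries (Fin 4) ℚ :=
  fun v => if ∃ c : ℕ, v = c • g then 1 else 0

open Classical in
lemma coeff_Geom (g v : Fin 4 →₀ ℕ) :
    MvPowerSeries.coeff v (Geom g) = if ∃ c : ℕ, v = c • g then 1 else 0 := rfl

lemma geom_mul (g : Fin 4 →₀ ℕ) (hg : ∀ c : ℕ, c • g = 0 → c = 0) :
    Geom g * (1 - MvPowerSeries.monomial g 1) = 1 := by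
  have hgne : g ≠ 0 := fun h =>
    absurd (hg 1 (by rw [one_smul, h])) one_ne_zero
  apply MvPowerSeries.ext; intro v
  rw [mul_sub, mul_one, map_sub, MvPowerSeries.coeff_mul_monomial, MvPowerSeries.coeff_one]
  by_cases h : ∃ c : ℕ, v = c • g
  · obtain ⟨c, rfl⟩ := h
    cases c with
    | zero =>
      rw [zero_smul, if_neg (fun hle => hgne (nonpos_iff_eq_zero.mp hle)), if_pos rfl]
      have h1 : MvPowerSeries.coeff 0 (Geom g) = 1 := by
        rw [coeff_Geom, if_pos ⟨0, (zero_smul ℕ g).symm⟩]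
      rw [h1, sub_zero]
    | succ c =>
      have hle : g ≤ (c+1) • g := by rw [succ_nsmul]; exact le_add_self
      have hsub : (c+1) • g - g = c • g := by rw [succ_nsmul]; exact add_tsub_cancel_right _ _
      have hne : (c+1) • g ≠ 0 := fun h0 => by simpa using hg (c+1) h0
      rw [if_pos hle, hsub, if_neg hne]
      have h1 : MvPowerSeries.coeff (c • g) (Geom g) = 1 := by
        rw [coeff_Geom, if_pos ⟨c, rfl⟩]
      have h2 : MvPowerSeries.coeff ((c+1) • g) (Geom g) = 1 := by
        rw [coeff_Geom, if_pos ⟨c+1, rfl⟩]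
      rw [h1, h2]; norm_num
  · have h0 : MvPowerSeries.coeff v (Geom g) = 0 := by rw [coeff_Geom, if_neg h]
    have hvne : v ≠ 0 := fun h0 => h ⟨0, by rw [h0, zero_smul]⟩
    rw [h0, if_neg hvne]
    by_cases hle : g ≤ v
    · rw [if_pos hle]
      have h3 : MvPowerSeries.coeff (v - g) (Geom g) = 0 := by
        rw [coeff_Geom, if_neg]
        rintro ⟨c, hc⟩
        exact h ⟨c+1, by rw [succ_nsmul, ← hc, tsub_add_cancel_of_le hle]⟩
      rw [h3]; norm_num
    · rw [if_neg hle]; norm_num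

lemma zero4 : (0 : Fin 4 →₀ ℕ) = V 0 0 0 0 := by ext j; fin_cases j <;> rfl

lemma vA (a : ℕ) : a • genDeg 0 = V (2*a) (2*a) 0 0 := by
  rw [genDeg0, V_smul]; exact V_congr (by ring) (by ring) (by ring) (by ring)

lemma vD (d : ℕ) : d • genDeg 3 = V 0 0 (2*d) (2*d) := by
  rw [genDeg3, V_smul]; exact V_congr (by ring) (by ring) (by ring) (by ring)

lemma vB1 (b : ℕ) : b • genDeg 1 = V b 0 (3*b) 0 := by
  rw [genDeg1, V_smul]; exact V_congr (by ring) (by ring) (by ring) (by ring)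

lemma vE (e : ℕ) : e • genDeg 4 = V 0 e 0 (3*e) := by
  rw [genDeg4, V_smul]; exact V_congr (by ring) (by ring) (by ring) (by ring)

lemma vAD (a d : ℕ) : a • genDeg 0 + d • genDeg 3 = V (2*a) (2*a) (2*d) (2*d) := by
  rw [vA, vD, V_add]; exact V_congr (by ring) (by ring) (by ring) (by ring)

lemma vBE (b e : ℕ) : b • genDeg 1 + e • genDeg 4 = V b e (3*b) (3*e) := by
  rw [vB1, vE, V_add]; exact V_congr (by ring) (by ring) (by ring) (by ring)

lemma vC (c : ℕ) : c • genDeg 2 = V c c c c := by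
  rw [genDeg2, V_smul]; exact V_congr (by ring) (by ring) (by ring) (by ring)

lemma deg4' (a b d e : ℕ) :
    a • genDeg 0 + b • genDeg 1 + d • genDeg 3 + e • genDeg 4
      = V (2*a+b) (2*a+e) (3*b+2*d) (2*d+3*e) := by
  rw [genDeg0, genDeg1, genDeg3, genDeg4, V_smul, V_smul, V_smul, V_smul,
    V_add, V_add, V_add]
  exact V_congr (by ring) (by ring) (by ring) (by ring)

open Classical in
def GA : MvPowerSeries (Fin 4) ℚ :=
  fun v => if ∃ a d : ℕ, (a = 0 ∨ d = 0) ∧ v = a • genDeg 0 + d • genDeg 3 then 1 else 0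

open Classical in
def GB : MvPowerSeries (Fin 4) ℚ :=
  fun v => if ∃ b e : ℕ, (b = 0 ∨ e = 0) ∧ v = b • genDeg 1 + e • genDeg 4 then 1 else 0

open Classical in
lemma coeff_GA (v : Fin 4 →₀ ℕ) :
    MvPowerSeries.coeff v GA
      = if ∃ a d : ℕ, (a = 0 ∨ d = 0) ∧ v = a • genDeg 0 + d • genDeg 3 then 1 else 0 := rfl

open Classical in
lemma coeff_GB (v : Fin 4 →₀ ℕ) :
    MvPowerSeries.coeff v GB
      = if ∃ b e : ℕ, (b = 0 ∨ e = 0) ∧ v = b • genDeg 1 + e • genDeg 4 then 1 else 0 := rfl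

lemma GA_rep {x : Fin 4 →₀ ℕ} (h : MvPowerSeries.coeff x GA ≠ 0) :
    ∃ a d : ℕ, (a = 0 ∨ d = 0) ∧ x = a • genDeg 0 + d • genDeg 3 := by
  by_contra hc; rw [coeff_GA, if_neg hc] at h; exact h rfl

lemma GB_rep {x : Fin 4 →₀ ℕ} (h : MvPowerSeries.coeff x GB ≠ 0) :
    ∃ b e : ℕ, (b = 0 ∨ e = 0) ∧ x = b • genDeg 1 + e • genDeg 4 := by
  by_contra hc; rw [coeff_GB, if_neg hc] at h; exact h rfl

lemma Geom_rep {g x : Fin 4 →₀ ℕ} (h : MvPowerSeries.coeff x (Geom g) ≠ 0) :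
    ∃ c : ℕ, x = c • g := by
  by_contra hc; rw [coeff_Geom, if_neg hc] at h; exact h rfl

/-- `GA` is a difference of geometric series. -/
lemma GA_eq : GA = Geom (genDeg 0) + Geom (genDeg 3) - 1 := by
  apply MvPowerSeries.ext; intro v
  rw [map_sub, map_add, coeff_GA, coeff_Geom, coeff_Geom, MvPowerSeries.coeff_one]
  have hover : (∃ a : ℕ, v = a • genDeg 0) → (∃ d : ℕ, v = d • genDeg 3) → v = 0 := by
    rintro ⟨a, rfl⟩ ⟨d, hd⟩
    rw [vA, vD] at hd
    obtain ⟨h1, -, -, -⟩ := V_inj hd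
    rw [vA, zero4]
    exact V_congr (by omega) (by omega) rfl rfl
  by_cases h0 : ∃ a : ℕ, v = a • genDeg 0
  · by_cases h3 : ∃ d : ℕ, v = d • genDeg 3
    · have hv0 : v = 0 := hover h0 h3
      have cA : ∃ a d : ℕ, (a = 0 ∨ d = 0) ∧ v = a • genDeg 0 + d • genDeg 3 :=
        ⟨0, 0, Or.inl rfl, by rw [hv0, zero_smul, zero_smul, add_zero]⟩
      rw [if_pos cA, if_pos h0, if_pos h3, if_pos hv0]
      norm_num
    · have hvne : v ≠ 0 := fun hv => h3 ⟨0, by rw [hv, zero_smul]⟩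
      obtain ⟨a, ha⟩ := h0
      have cA : ∃ a d : ℕ, (a = 0 ∨ d = 0) ∧ v = a • genDeg 0 + d • genDeg 3 :=
        ⟨a, 0, Or.inr rfl, by rw [zero_smul, add_zero]; exact ha⟩
      have c0 : ∃ a : ℕ, v = a • genDeg 0 := ⟨a, ha⟩
      rw [if_pos cA, if_pos c0, if_neg h3, if_neg hvne]
      norm_num
  · by_cases h3 : ∃ d : ℕ, v = d • genDeg 3
    · have hvne : v ≠ 0 := fun hv => h0 ⟨0, by rw [hv, zero_smul]⟩
      obtain ⟨d, hd⟩ := h3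
      have cA : ∃ a d : ℕ, (a = 0 ∨ d = 0) ∧ v = a • genDeg 0 + d • genDeg 3 :=
        ⟨0, d, Or.inl rfl, by rw [zero_smul, zero_add]; exact hd⟩
      have c3 : ∃ d : ℕ, v = d • genDeg 3 := ⟨d, hd⟩
      rw [if_pos cA, if_neg h0, if_pos c3, if_neg hvne]
      norm_num
    · have hvne : v ≠ 0 := fun hv => h0 ⟨0, by rw [hv, zero_smul]⟩
      rw [if_neg h0, if_neg h3, if_neg hvne, if_neg]
      · norm_num
      · rintro ⟨a, d, had, hv⟩
        rcases had with rfl | rfl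
        · exact h3 ⟨d, by rw [hv, zero_smul, zero_add]⟩
        · exact h0 ⟨a, by rw [hv, zero_smul, add_zero]⟩

/-- `GB` is a difference of geometric series. -/
lemma GB_eq : GB = Geom (genDeg 1) + Geom (genDeg 4) - 1 := by
  apply MvPowerSeries.ext; intro v
  rw [map_sub, map_add, coeff_GB, coeff_Geom, coeff_Geom, MvPowerSeries.coeff_one]
  have hover : (∃ b : ℕ, v = b • genDeg 1) → (∃ e : ℕ, v = e • genDeg 4) → v = 0 := by
    rintro ⟨b, rfl⟩ ⟨e, he⟩
    rw [vB1, vE] at he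
    obtain ⟨h1, -, -, -⟩ := V_inj he
    rw [vB1, zero4]
    exact V_congr (by omega) rfl (by omega) rfl
  by_cases h0 : ∃ b : ℕ, v = b • genDeg 1
  · by_cases h3 : ∃ e : ℕ, v = e • genDeg 4
    · have hv0 : v = 0 := hover h0 h3
      have cB : ∃ b e : ℕ, (b = 0 ∨ e = 0) ∧ v = b • genDeg 1 + e • genDeg 4 :=
        ⟨0, 0, Or.inl rfl, by rw [hv0, zero_smul, zero_smul, add_zero]⟩
      rw [if_pos cB, if_pos h0, if_pos h3, if_pos hv0]
      norm_num
    · have hvne : v ≠ 0 := fun hv => h3 ⟨0, by rw [hv, zero_smul]⟩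
      obtain ⟨b, hb⟩ := h0
      have cB : ∃ b e : ℕ, (b = 0 ∨ e = 0) ∧ v = b • genDeg 1 + e • genDeg 4 :=
        ⟨b, 0, Or.inr rfl, by rw [zero_smul, add_zero]; exact hb⟩
      have c1 : ∃ b : ℕ, v = b • genDeg 1 := ⟨b, hb⟩
      rw [if_pos cB, if_pos c1, if_neg h3, if_neg hvne]
      norm_num
  · by_cases h3 : ∃ e : ℕ, v = e • genDeg 4
    · have hvne : v ≠ 0 := fun hv => h0 ⟨0, by rw [hv, zero_smul]⟩
      obtain ⟨e, he⟩ := h3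
      have cB : ∃ b e : ℕ, (b = 0 ∨ e = 0) ∧ v = b • genDeg 1 + e • genDeg 4 :=
        ⟨0, e, Or.inl rfl, by rw [zero_smul, zero_add]; exact he⟩
      have c4 : ∃ e : ℕ, v = e • genDeg 4 := ⟨e, he⟩
      rw [if_pos cB, if_neg h0, if_pos c4, if_neg hvne]
      norm_num
    · have hvne : v ≠ 0 := fun hv => h0 ⟨0, by rw [hv, zero_smul]⟩
      rw [if_neg h0, if_neg h3, if_neg hvne, if_neg]
      · norm_num
      · rintro ⟨b, e, hbe, hv⟩
        rcases hbe with rfl | rfl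
        · exact h3 ⟨e, by rw [hv, zero_smul, zero_add]⟩
        · exact h0 ⟨b, by rw [hv, zero_smul, add_zero]⟩

open Classical in
lemma coeff_AB (v : Fin 4 →₀ ℕ) :
    MvPowerSeries.coeff v (GA * GB)
      = if ∃ a b d e : ℕ, (a = 0 ∨ d = 0) ∧ (b = 0 ∨ e = 0) ∧
          v = a • genDeg 0 + b • genDeg 1 + d • genDeg 3 + e • genDeg 4 then 1 else 0 := by
  rw [MvPowerSeries.coeff_mul]
  by_cases h : ∃ a b d e : ℕ, (a = 0 ∨ d = 0) ∧ (b = 0 ∨ e = 0) ∧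
      v = a • genDeg 0 + b • genDeg 1 + d • genDeg 3 + e • genDeg 4
  · obtain ⟨a, b, d, e, hAD, hBE, hv⟩ := h
    rw [if_pos ⟨a, b, d, e, hAD, hBE, hv⟩]
    rw [Finset.sum_eq_single_of_mem
      (a • genDeg 0 + d • genDeg 3, b • genDeg 1 + e • genDeg 4)]
    · rw [coeff_GA, coeff_GB, if_pos ⟨a, d, hAD, rfl⟩, if_pos ⟨b, e, hBE, rfl⟩]
      norm_num
    · rw [Finset.HasAntidiagonal.mem_antidiagonal, hv]; dsimp only; ac_rfl
    · rintro ⟨x, y⟩ hmem hne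
      by_contra hz
      obtain ⟨a', d', hAD', rfl⟩ := GA_rep (left_ne_zero_of_mul hz)
      obtain ⟨b', e', hBE', rfl⟩ := GB_rep (right_ne_zero_of_mul hz)
      apply hne
      have hsum := Finset.HasAntidiagonal.mem_antidiagonal.mp hmem
      rw [hv] at hsum
      rw [vAD, vBE, V_add, deg4'] at hsum
      obtain ⟨q1, q2, q3, q4⟩ := V_inj hsum
      obtain ⟨rfl, rfl, rfl, rfl⟩ : a' = a ∧ b' = b ∧ d' = d ∧ e' = e := by omega
      rfl
  · rw [if_neg h]
    apply Finset.sum_eq_zero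
    rintro ⟨x, y⟩ hmem
    by_contra hz
    obtain ⟨a', d', hAD', rfl⟩ := GA_rep (left_ne_zero_of_mul hz)
    obtain ⟨b', e', hBE', rfl⟩ := GB_rep (right_ne_zero_of_mul hz)
    have hsum := Finset.HasAntidiagonal.mem_antidiagonal.mp hmem
    exact h ⟨a', b', d', e', hAD', hBE', by rw [← hsum]; dsimp only; ac_rfl⟩

lemma AB_rep {x : Fin 4 →₀ ℕ} (h : MvPowerSeries.coeff x (GA * GB) ≠ 0) :
    ∃ a b d e : ℕ, (a = 0 ∨ d = 0) ∧ (b = 0 ∨ e = 0) ∧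
      x = a • genDeg 0 + b • genDeg 1 + d • genDeg 3 + e • genDeg 4 := by
  by_contra hc; rw [coeff_AB, if_neg hc] at h; exact h rfl

open Classical in
lemma coeff_ABC (v : Fin 4 →₀ ℕ) :
    MvPowerSeries.coeff v (GA * GB * Geom (genDeg 2))
      = if ∃ a b c d e : ℕ, (a = 0 ∨ d = 0) ∧ (b = 0 ∨ e = 0) ∧
          v = a • genDeg 0 + b • genDeg 1 + c • genDeg 2 + d • genDeg 3 + e • genDeg 4
        then 1 else 0 := by
  rw [MvPowerSeries.coeff_mul]
  by_cases h : ∃ a b c d e : ℕ, (a = 0 ∨ d = 0) ∧ (b = 0 ∨ e = 0) ∧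
      v = a • genDeg 0 + b • genDeg 1 + c • genDeg 2 + d • genDeg 3 + e • genDeg 4
  · obtain ⟨a, b, c, d, e, hAD, hBE, hv⟩ := h
    rw [if_pos ⟨a, b, c, d, e, hAD, hBE, hv⟩]
    rw [Finset.sum_eq_single_of_mem
      (a • genDeg 0 + b • genDeg 1 + d • genDeg 3 + e • genDeg 4, c • genDeg 2)]
    · rw [coeff_AB, coeff_Geom, if_pos ⟨a, b, d, e, hAD, hBE, rfl⟩, if_pos ⟨c, rfl⟩]
      norm_num
    · rw [Finset.HasAntidiagonal.mem_antidiagonal, hv]; dsimp only; ac_rfl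
    · rintro ⟨x, y⟩ hmem hne
      by_contra hz
      obtain ⟨a', b', d', e', hAD', hBE', rfl⟩ := AB_rep (left_ne_zero_of_mul hz)
      obtain ⟨c', rfl⟩ := Geom_rep (right_ne_zero_of_mul hz)
      apply hne
      have hsum := Finset.HasAntidiagonal.mem_antidiagonal.mp hmem
      rw [hv] at hsum
      rw [deg4', vC, V_add, deg5] at hsum
      obtain ⟨q1, q2, q3, q4⟩ := V_inj hsum
      obtain ⟨rfl, rfl, rfl, rfl, rfl⟩ : a' = a ∧ b' = b ∧ c' = c ∧ d' = d ∧ e' = e := by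
        omega
      rfl
  · rw [if_neg h]
    apply Finset.sum_eq_zero
    rintro ⟨x, y⟩ hmem
    by_contra hz
    obtain ⟨a', b', d', e', hAD', hBE', rfl⟩ := AB_rep (left_ne_zero_of_mul hz)
    obtain ⟨c', rfl⟩ := Geom_rep (right_ne_zero_of_mul hz)
    have hsum := Finset.HasAntidiagonal.mem_antidiagonal.mp hmem
    exact h ⟨a', b', c', d', e', hAD', hBE', by rw [← hsum]; dsimp only; ac_rfl⟩

/-- The Hilbert series as a product of indicator series. -/
lemma hilbert_eq : hilbertSeries = GA * GB * Geom (genDeg 2) := by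
  apply MvPowerSeries.ext; intro v
  rw [MvPowerSeries.coeff_apply, hilbertSeries, finrank_gradedPiece, coeff_ABC]
  have hiff : (∃ e, monDeg e = v) ↔ ∃ a b c d e : ℕ, (a = 0 ∨ d = 0) ∧ (b = 0 ∨ e = 0) ∧
      v = a • genDeg 0 + b • genDeg 1 + c • genDeg 2 + d • genDeg 3 + e • genDeg 4 := by
    constructor
    · rintro ⟨f, hf⟩
      rw [eta5 f] at hf
      obtain ⟨a, b, c, d, e, hA, hB, hdeg, -⟩ :=
        norm (f 0 + f 1 + f 3 + f 4) (f 0) (f 1) (f 2) (f 3) (f 4) le_rfl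
      have hvd : v = monDeg (E a b c d e) := (hdeg.trans hf).symm
      rw [monDeg_E] at hvd
      exact ⟨a, b, c, d, e, hA, hB, hvd⟩
    · rintro ⟨a, b, c, d, e, -, -, hv⟩
      exact ⟨E a b c d e, by rw [monDeg_E]; exact hv.symm⟩
  rw [Nat.cast_ite, Nat.cast_one, Nat.cast_zero]
  by_cases hP : ∃ e, monDeg e = v
  · rw [if_pos hP, if_pos (hiff.mp hP)]
  · rw [if_neg hP, if_neg fun hq => hP (hiff.mpr hq)]

lemma smul_V_zero {p q r s : ℕ} (c : ℕ) (hc : c • V p q r s = 0) :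
    c * p = 0 ∧ c * q = 0 ∧ c * r = 0 ∧ c * s = 0 :=
  V_inj ((V_smul c p q r s).symm.trans (hc.trans zero4))

lemma hz0 : ∀ c : ℕ, c • genDeg 0 = 0 → c = 0 := by
  intro c hc; rw [genDeg0] at hc; have := smul_V_zero c hc; omega
lemma hz1 : ∀ c : ℕ, c • genDeg 1 = 0 → c = 0 := by
  intro c hc; rw [genDeg1] at hc; have := smul_V_zero c hc; omega
lemma hz2 : ∀ c : ℕ, c • genDeg 2 = 0 → c = 0 := by
  intro c hc; rw [genDeg2] at hc; have := smul_V_zero c hc; omega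
lemma hz3 : ∀ c : ℕ, c • genDeg 3 = 0 → c = 0 := by
  intro c hc; rw [genDeg3] at hc; have := smul_V_zero c hc; omega
lemma hz4 : ∀ c : ℕ, c • genDeg 4 = 0 → c = 0 := by
  intro c hc; rw [genDeg4] at hc; have := smul_V_zero c hc; omega

end HSaux

open HSaux in
/-- The rational function
`(1-t₁²t₂²t₃²t₄²)(1-t₁t₂t₃³t₄³)/((1-t₁²t₂²)(1-t₁t₃³)(1-t₃²t₄²)(1-t₂t₄³)(1-t₁t₂t₃t₄))`
is the Hilbert series of `ℂ[x₁,…,x₅]/(x₁x₄-x₃², x₃x₄-x₂x₅)` under the stated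
multigrading, expressed as an identity of formal power series. -/
theorem hilbert_series_L131Z2 :
    hilbertSeries *
        ((1 - mon 2 2 0 0) * (1 - mon 1 0 3 0) * (1 - mon 0 0 2 2) *
          (1 - mon 0 1 0 3) * (1 - mon 1 1 1 1))
      = (1 - mon 2 2 2 2) * (1 - mon 1 1 3 3) := by
  have hM0 : MvPowerSeries.monomial (genDeg 0) 1 = mon 2 2 0 0 := rfl
  have hM1 : MvPowerSeries.monomial (genDeg 1) 1 = mon 1 0 3 0 := rfl
  have hM2 : MvPowerSeries.monomial (genDeg 2) 1 = mon 1 1 1 1 := rfl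
  have hM3 : MvPowerSeries.monomial (genDeg 3) 1 = mon 0 0 2 2 := rfl
  have hM4 : MvPowerSeries.monomial (genDeg 4) 1 = mon 0 1 0 3 := rfl
  have hG0 : Geom (genDeg 0) * (1 - mon 2 2 0 0) = 1 := by
    rw [← hM0]; exact geom_mul _ hz0
  have hG1 : Geom (genDeg 1) * (1 - mon 1 0 3 0) = 1 := by
    rw [← hM1]; exact geom_mul _ hz1
  have hG2 : Geom (genDeg 2) * (1 - mon 1 1 1 1) = 1 := by
    rw [← hM2]; exact geom_mul _ hz2
  have hG3 : Geom (genDeg 3) * (1 - mon 0 0 2 2) = 1 := by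
    rw [← hM3]; exact geom_mul _ hz3
  have hG4 : Geom (genDeg 4) * (1 - mon 0 1 0 3) = 1 := by
    rw [← hM4]; exact geom_mul _ hz4
  have hprod03 : mon 2 2 0 0 * mon 0 0 2 2 = mon 2 2 2 2 := by
    have hE : Finsupp.equivFunOnFinite.symm ![2,2,0,0] + Finsupp.equivFunOnFinite.symm ![0,0,2,2]
        = (Finsupp.equivFunOnFinite.symm ![2,2,2,2] : Fin 4 →₀ ℕ) :=
      (V_add 2 2 0 0 0 0 2 2).trans
        (V_congr (by norm_num) (by norm_num) (by norm_num) (by norm_num))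
    rw [mon, mon, mon, MvPowerSeries.monomial_mul_monomial, one_mul, hE]
  have hprod14 : mon 1 0 3 0 * mon 0 1 0 3 = mon 1 1 3 3 := by
    have hE : Finsupp.equivFunOnFinite.symm ![1,0,3,0] + Finsupp.equivFunOnFinite.symm ![0,1,0,3]
        = (Finsupp.equivFunOnFinite.symm ![1,1,3,3] : Fin 4 →₀ ℕ) :=
      (V_add 1 0 3 0 0 1 0 3).trans
        (V_congr (by norm_num) (by norm_num) (by norm_num) (by norm_num))
    rw [mon, mon, mon, MvPowerSeries.monomial_mul_monomial, one_mul, hE]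
  have hA' : GA * ((1 - mon 2 2 0 0) * (1 - mon 0 0 2 2)) = 1 - mon 2 2 2 2 := by
    rw [GA_eq, ← hprod03]
    linear_combination (1 - mon 0 0 2 2) * hG0 + (1 - mon 2 2 0 0) * hG3
  have hB' : GB * ((1 - mon 1 0 3 0) * (1 - mon 0 1 0 3)) = 1 - mon 1 1 3 3 := by
    rw [GB_eq, ← hprod14]
    linear_combination (1 - mon 0 1 0 3) * hG1 + (1 - mon 1 0 3 0) * hG4
  rw [hilbert_eq]
  linear_combination
    (GB * Geom (genDeg 2) * (1 - mon 1 0 3 0) * (1 - mon 0 1 0 3) * (1 - mon 1 1 1 1)) * hA'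
      + ((1 - mon 2 2 2 2) * Geom (genDeg 2) * (1 - mon 1 1 1 1)) * hB'
      + ((1 - mon 2 2 2 2) * (1 - mon 1 1 3 3)) * hG2

end
end
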